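/- The poset 𝔹(π⃗, f) is ω₁-closed. In fact, if ⟨p_n : n < ω⟩ is a ≤-descending sequence of conditions in 𝔹(π⃗, f) with each p_n = (h_n, I_n), then the pair (⋃_n h_n, ⋃_n I_n) is a condition in 𝔹(π⃗, f) and is the greatest lower bound of ⟨p_n : n < ω⟩. -/
import Mathlib


noncomputable section

abbrev Ordi : Type 1 := Ordinal.{0}

/-- The ordinal `ω₁`. -/
def w1 : Ordi := (Cardinal.aleph 1).ord

/-- The ordinal `ω₂`. -/
def w2 : Ordi := (Cardinal.aleph 2).ord

/-- `S²₁`: the set of ordinals below `ω₂` of cofinality `ω₁`. -/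
def S21 : Set Ordi := {α | α < w2 ∧ Ordinal.cof α = Cardinal.aleph 1}

/-- A condition in the poset `𝔹(π⃗, f)`: a pair `(h, I)` where `h` is an
injective partial function on `ω₂` (represented by a total function `h`
together with its domain `dom`) with countable domain, fixing no point of its
domain, and `I` is a countable subset of `S²₁` each of whose members is closed
under `h` and `h⁻¹`.  (Membership in the poset does not depend on `π⃗` or `f`.) -/
structure BCond where
  dom : Set Ordi
  h : Ordi → Ordi
  I : Set Ordi
  dom_countable : dom.Countable
  dom_subset : dom ⊆ Set.Iio w2
  mapsTo : ∀ α ∈ dom, h α < w2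
  injOn : Set.InjOn h dom
  ne_self : ∀ α ∈ dom, h α ≠ α
  I_countable : I.Countable
  I_subset : I ⊆ S21
  closed : ∀ β ∈ I, ∀ α ∈ dom, (α < β → h α < β) ∧ (h α < β → α < β)

/-- The order on `𝔹(π⃗, f)`: `q ≤ p` iff `h_p ⊆ h_q`, `I_p ⊆ I_q`, and the
oscillation requirements (c)(i) and (c)(ii) hold for every new point of the
domain below a member of `I_p`. -/
def BLe (pi : Ordi → Ordi → Ordi) (f : Ordi → Ordi) (q p : BCond) : Prop :=
  (p.dom ⊆ q.dom ∧ ∀ α ∈ p.dom, q.h α = p.h α) ∧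
  p.I ⊆ q.I ∧
  ∀ α ∈ q.dom, α ∉ p.dom → ∀ β ∈ p.I, α < β →
    (f (min (pi β α) (pi β (q.h α))) < max (pi β α) (pi β (q.h α))) ∧
    (∀ γ ∈ q.dom, γ < β → γ ≠ α →
      f (min (pi β (q.h γ)) (pi β (q.h α))) < max (pi β (q.h γ)) (pi β (q.h α)))

theorem BLe_refl (pi : Ordi → Ordi → Ordi) (f : Ordi → Ordi) (p : BCond) : BLe pi f p p :=
  ⟨⟨subset_rfl, fun _ _ => rfl⟩, subset_rfl, fun α hα hnα => absurd hα hnα⟩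

theorem BLe_trans (pi : Ordi → Ordi → Ordi) (f : Ordi → Ordi) {r q p : BCond}
    (hrq : BLe pi f r q) (hqp : BLe pi f q p) : BLe pi f r p := by
  obtain ⟨⟨hd1, hh1⟩, hI1, hc1⟩ := hrq
  obtain ⟨⟨hd2, hh2⟩, hI2, hc2⟩ := hqp
  refine ⟨⟨hd2.trans hd1, fun α hα => (hh1 α (hd2 hα)).trans (hh2 α hα)⟩, hI2.trans hI1, ?_⟩
  intro α hα hαp β hβ hαβ
  by_cases hαq : α ∈ q.dom
  · have hrhα : r.h α = q.h α := hh1 α hαq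
    obtain ⟨hi, hii⟩ := hc2 α hαq hαp β hβ hαβ
    refine ⟨by rw [hrhα]; exact hi, ?_⟩
    intro γ hγ hγβ hγα
    by_cases hγq : γ ∈ q.dom
    · rw [hrhα, hh1 γ hγq]; exact hii γ hγq hγβ hγα
    · have := (hc1 γ hγ hγq β (hI2 hβ) hγβ).2 α (hd1 hαq) hαβ (Ne.symm hγα)
      rwa [min_comm, max_comm] at this
  · exact hc1 α hα hαq β (hI2 hβ) hαβ

/-- `𝔹(π⃗, f)` is `ω₁`-closed: the union of a descending `ω`-sequence of
conditions is a condition, and it is the greatest lower bound of the sequence. -/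
theorem BCond_omega1_closed (pi : Ordi → Ordi → Ordi) (f : Ordi → Ordi)
    (hpi : ∀ β, w1 ≤ β → β < w2 → Set.BijOn (pi β) (Set.Iio β) (Set.Iio w1))
    (hf_maps : ∀ i < w1, f i < w1) (hf_inj : Set.InjOn f (Set.Iio w1))
    (p : ℕ → BCond) (hdesc : ∀ n : ℕ, BLe pi f (p (n + 1)) (p n)) :
    ∃ q : BCond,
      q.dom = ⋃ n : ℕ, (p n).dom ∧
      q.I = ⋃ n : ℕ, (p n).I ∧
      (∀ n : ℕ, ∀ α ∈ (p n).dom, q.h α = (p n).h α) ∧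
      (∀ n : ℕ, BLe pi f q (p n)) ∧
      (∀ r : BCond, (∀ n : ℕ, BLe pi f r (p n)) → BLe pi f r q) := by
  classical
  have hchain : ∀ n m : ℕ, n ≤ m → BLe pi f (p m) (p n) := by
    intro n m hnm
    induction m, hnm using Nat.le_induction with
    | base => exact BLe_refl pi f (p n)
    | succ m hnm ih => exact BLe_trans pi f (hdesc m) ih
  have hdom_mono : ∀ {n m : ℕ}, n ≤ m → (p n).dom ⊆ (p m).dom :=
    fun h => (hchain _ _ h).1.1
  have hh_agree : ∀ {n m : ℕ}, n ≤ m → ∀ α ∈ (p n).dom, (p m).h α = (p n).h α :=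
    fun h => (hchain _ _ h).1.2
  have hI_mono : ∀ {n m : ℕ}, n ≤ m → (p n).I ⊆ (p m).I :=
    fun h => (hchain _ _ h).2.1
  set H : Ordi → Ordi := fun α =>
    if hα : ∃ n, α ∈ (p n).dom then (p hα.choose).h α else α with hH
  have Hspec : ∀ n : ℕ, ∀ α ∈ (p n).dom, H α = (p n).h α := by
    intro n α hα
    have hex : ∃ n, α ∈ (p n).dom := ⟨n, hα⟩
    rw [hH]; simp only [dif_pos hex]
    rcases le_total hex.choose n with h | h
    · exact (hh_agree h α hex.choose_spec).symm
    · exact hh_agree h α hα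
  refine ⟨⟨⋃ n, (p n).dom, H, ⋃ n, (p n).I, ?_, ?_, ?_, ?_, ?_, ?_, ?_, ?_⟩, rfl, rfl, ?_, ?_, ?_⟩
  · exact Set.countable_iUnion fun n => (p n).dom_countable
  · exact Set.iUnion_subset fun n => (p n).dom_subset
  · rintro α hα
    obtain ⟨n, hn⟩ := Set.mem_iUnion.1 hα
    rw [Hspec n α hn]; exact (p n).mapsTo α hn
  · rintro α hα β hβ hαβ
    obtain ⟨n, hn⟩ := Set.mem_iUnion.1 hα
    obtain ⟨m, hm⟩ := Set.mem_iUnion.1 hβ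
    have hn' : α ∈ (p (max n m)).dom := hdom_mono (le_max_left n m) hn
    have hm' : β ∈ (p (max n m)).dom := hdom_mono (le_max_right n m) hm
    rw [Hspec _ α hn', Hspec _ β hm'] at hαβ
    exact (p (max n m)).injOn hn' hm' hαβ
  · rintro α hα
    obtain ⟨n, hn⟩ := Set.mem_iUnion.1 hα
    rw [Hspec n α hn]; exact (p n).ne_self α hn
  · exact Set.countable_iUnion fun n => (p n).I_countable
  · exact Set.iUnion_subset fun n => (p n).I_subset
  · rintro β hβ α hα
    obtain ⟨n, hn⟩ := Set.mem_iUnion.1 hβ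
    obtain ⟨m, hm⟩ := Set.mem_iUnion.1 hα
    have hn' : β ∈ (p (max n m)).I := hI_mono (le_max_left n m) hn
    have hm' : α ∈ (p (max n m)).dom := hdom_mono (le_max_right n m) hm
    rw [Hspec _ α hm']
    exact (p (max n m)).closed β hn' α hm'
  · exact Hspec
  · -- q ≤ p n for all n
    intro n
    refine ⟨⟨Set.subset_iUnion (fun k => (p k).dom) n, fun α hα => Hspec n α hα⟩,
      Set.subset_iUnion (fun k => (p k).I) n, ?_⟩
    intro α hα hαn β hβ hαβ
    obtain ⟨m, hm⟩ := Set.mem_iUnion.1 hα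
    refine ⟨?_, ?_⟩
    · have hmn : ¬ m ≤ n := fun h => hαn (hdom_mono h hm)
      have hm' : α ∈ (p m).dom := hm
      have := ((hchain n m (le_of_not_ge hmn)).2.2 α hm' hαn β hβ hαβ).1
      show f (min (pi β α) (pi β (H α))) < max (pi β α) (pi β (H α))
      rwa [Hspec m α hm']
    · intro γ hγ hγβ hγα
      obtain ⟨k, hk⟩ := Set.mem_iUnion.1 hγ
      set K := max (max m k) (n + 1) with hK
      have hnK : n ≤ K := le_trans (Nat.le_succ n) (le_max_right _ _)
      have hαK : α ∈ (p K).dom := hdom_mono (le_trans (le_max_left m k) (le_max_left _ _)) hm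
      have hγK : γ ∈ (p K).dom := hdom_mono (le_trans (le_max_right m k) (le_max_left _ _)) hk
      have := ((hchain n K hnK).2.2 α hαK hαn β hβ hαβ).2 γ hγK hγβ hγα
      show f (min (pi β (H γ)) (pi β (H α))) < max (pi β (H γ)) (pi β (H α))
      rwa [Hspec K α hαK, Hspec K γ hγK]
  · -- glb
    intro r hr
    refine ⟨⟨Set.iUnion_subset fun n => (hr n).1.1, ?_⟩,
      Set.iUnion_subset fun n => (hr n).2.1, ?_⟩
    · intro α hα
      obtain ⟨n, hn⟩ := Set.mem_iUnion.1 hα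
      show r.h α = H α
      rw [Hspec n α hn]; exact (hr n).1.2 α hn
    · intro α hα hαq β hβ hαβ
      obtain ⟨n, hn⟩ := Set.mem_iUnion.1 hβ
      have hαn : α ∉ (p n).dom := fun h => hαq (Set.mem_iUnion.2 ⟨n, h⟩)
      exact (hr n).2.2 α hα hαn β hn hαβ


end
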